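/- In the monoid G⁺_{B_ii} = ⟨ a, b, c | cbb = bba, ab = bc, ac = ca ⟩_mo, left cancellativity holds, and the following divisibility facts hold: (i) if aX = bY then X = bZ and Y = cZ for some Z; (ii) if aX = cY then X = cZ and Y = aZ for some Z; (iii) if bX = cY then there exist k ≥ 0 and Z with X = c^k·b·a·Z and Y = a^k·b·b·Z. -/

import Mathlib

/-- The three generators of the monoid of type B_ii. -/
inductive BGen : Type
  | a : BGen
  | b : BGen
  | c : BGen
deriving DecidableEq

/-- The defining relations cbb = bba, ab = bc, ac = ca. -/
inductive BRel : FreeMonoid BGen → FreeMonoid BGen → Prop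
  | cbb : BRel (FreeMonoid.of BGen.c * FreeMonoid.of BGen.b * FreeMonoid.of BGen.b)
               (FreeMonoid.of BGen.b * FreeMonoid.of BGen.b * FreeMonoid.of BGen.a)
  | ab : BRel (FreeMonoid.of BGen.a * FreeMonoid.of BGen.b)
              (FreeMonoid.of BGen.b * FreeMonoid.of BGen.c)
  | ac : BRel (FreeMonoid.of BGen.a * FreeMonoid.of BGen.c)
              (FreeMonoid.of BGen.c * FreeMonoid.of BGen.a)

/-- The monoid G⁺_{B_ii} = ⟨ a, b, c ∣ cbb = bba, ab = bc, ac = ca ⟩_mo. -/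
abbrev BMonoid : Type := (conGen BRel).Quotient

/-- The images of the generators in the monoid. -/
def bA : BMonoid := (conGen BRel).mk' (FreeMonoid.of BGen.a)
def bB : BMonoid := (conGen BRel).mk' (FreeMonoid.of BGen.b)
def bC : BMonoid := (conGen BRel).mk' (FreeMonoid.of BGen.c)


namespace BHelper

/-! ### The target left-cancellative monoid `Gm` -/

def rot : ℕ × ℕ × ℕ → ℕ × ℕ × ℕ := fun v => (v.2.1, v.2.2, v.1)

structure Gm where
  v : ℕ × ℕ × ℕ
  n : ℕ
deriving DecidableEq

lemma rot_add (v w : ℕ × ℕ × ℕ) : rot (v + w) = rot v + rot w := rfl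
lemma rot3 (v : ℕ × ℕ × ℕ) : rot (rot (rot v)) = v := rfl
lemma rot_inj : Function.Injective rot := fun a b h => by
  rw [← rot3 a, h, rot3]
lemma rotIter_add (m : ℕ) (v w : ℕ × ℕ × ℕ) :
    rot^[m] (v + w) = rot^[m] v + rot^[m] w := by
  induction m with
  | zero => rfl
  | succ k ih =>
      rw [Function.iterate_succ_apply', Function.iterate_succ_apply',
        Function.iterate_succ_apply', ih, rot_add]
lemma rotIter_zero (m : ℕ) : rot^[m] (0 : ℕ × ℕ × ℕ) = 0 := by
  induction m with
  | zero => rfl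
  | succ k ih => rw [Function.iterate_succ_apply', ih]; rfl
lemma rotIter_inj (m : ℕ) : Function.Injective (rot^[m]) :=
  Function.Injective.iterate rot_inj m

instance : Mul Gm := ⟨fun p q => ⟨p.v + rot^[p.n] q.v, p.n + q.n⟩⟩
instance : One Gm := ⟨⟨0, 0⟩⟩

lemma gm_mul_def (v w : ℕ × ℕ × ℕ) (m n : ℕ) :
    (⟨v, m⟩ * ⟨w, n⟩ : Gm) = ⟨v + rot^[m] w, m + n⟩ := rfl
lemma gm_one_def : (1 : Gm) = ⟨0, 0⟩ := rfl

instance : Monoid Gm where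
  mul_assoc := by
    rintro ⟨u, m⟩ ⟨v, n⟩ ⟨w, p⟩
    simp [gm_mul_def, rotIter_add, add_assoc, Function.iterate_add_apply]
  one_mul := by rintro ⟨v, n⟩; simp [gm_one_def, gm_mul_def]
  mul_one := by rintro ⟨v, n⟩; simp [gm_one_def, gm_mul_def, rotIter_zero]

lemma gm_cancel {g u w : Gm} (h : g * u = g * w) : u = w := by
  obtain ⟨gv, gn⟩ := g; obtain ⟨uv, un⟩ := u; obtain ⟨wv, wn⟩ := w
  simp only [gm_mul_def, Gm.mk.injEq] at h
  exact Gm.mk.injEq .. ▸ ⟨rotIter_inj gn (add_left_cancel h.1), Nat.add_left_cancel h.2⟩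


/-! ### The homomorphism φ : BMonoid →* Gm -/

def gen : BGen → Gm
  | .a => ⟨(1,0,0), 0⟩
  | .b => ⟨(0,0,0), 1⟩
  | .c => ⟨(0,1,0), 0⟩

lemma gen_resp : conGen BRel ≤ Con.ker (FreeMonoid.lift gen) := by
  refine Con.conGen_le.mpr ?_
  rintro x y h
  cases h <;> simp only [Con.ker_rel, map_mul, FreeMonoid.lift_eval_of] <;> decide

def phi : BMonoid →* Gm := Con.lift _ (FreeMonoid.lift gen) gen_resp

lemma phi_bA : phi bA = ⟨(1,0,0), 0⟩ := by
  rw [bA, phi, Con.lift_mk', FreeMonoid.lift_eval_of]; rfl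
lemma phi_bB : phi bB = ⟨(0,0,0), 1⟩ := by
  rw [bB, phi, Con.lift_mk', FreeMonoid.lift_eval_of]; rfl
lemma phi_bC : phi bC = ⟨(0,1,0), 0⟩ := by
  rw [bC, phi, Con.lift_mk', FreeMonoid.lift_eval_of]; rfl

/-! ### Basic relations in BMonoid -/

lemma relCBB : bC * bB * bB = bB * bB * bA :=
  (Con.eq _).mpr (ConGen.Rel.of _ _ BRel.cbb)
lemma relAB : bA * bB = bB * bC :=
  (Con.eq _).mpr (ConGen.Rel.of _ _ BRel.ab)
lemma relAC : bA * bC = bC * bA :=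
  (Con.eq _).mpr (ConGen.Rel.of _ _ BRel.ac)

lemma wCBB (t : BMonoid) : bC * (bB * (bB * t)) = bB * (bB * (bA * t)) := by
  rw [← mul_assoc, ← mul_assoc, relCBB, mul_assoc, mul_assoc]
lemma wAB (t : BMonoid) : bA * (bB * t) = bB * (bC * t) := by
  rw [← mul_assoc, relAB, mul_assoc]
lemma wAC (t : BMonoid) : bA * (bC * t) = bC * (bA * t) := by
  rw [← mul_assoc, relAC, mul_assoc]


/-! ### Derived moves -/

lemma powA_succ (x : ℕ) (t : BMonoid) : bA^(x+1) * t = bA^x * (bA * t) := by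
  rw [pow_succ, mul_assoc]
lemma powA_succ' (x : ℕ) (t : BMonoid) : bA^(x+1) * t = bA * (bA^x * t) := by
  rw [pow_succ', mul_assoc]
lemma powC_succ' (x : ℕ) (t : BMonoid) : bC^(x+1) * t = bC * (bC^x * t) := by
  rw [pow_succ', mul_assoc]
lemma powB_succ' (x : ℕ) (t : BMonoid) : bB^(x+1) * t = bB * (bB^x * t) := by
  rw [pow_succ', mul_assoc]

lemma wApow_B (x : ℕ) (t : BMonoid) : bA^x * (bB * t) = bB * (bC^x * t) := by
  induction x generalizing t with
  | zero => simp
  | succ k ih => rw [powA_succ', ih, wAB, ← powC_succ']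

lemma wApow_C (x : ℕ) (t : BMonoid) : bA^x * (bC * t) = bC * (bA^x * t) := by
  induction x generalizing t with
  | zero => simp
  | succ k ih => rw [powA_succ', ih, wAC, ← powA_succ']

lemma wC_Apow (x : ℕ) (t : BMonoid) : bC * (bA^x * t) = bA^x * (bC * t) :=
  (wApow_C x t).symm

lemma wApow_Cpow (x y : ℕ) (t : BMonoid) : bA^x * (bC^y * t) = bC^y * (bA^x * t) := by
  induction y generalizing t with
  | zero => simp
  | succ k ih => rw [powC_succ' k t, wApow_C x (bC^k * t), ih, powC_succ' k (bA^x * t)]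

lemma wB_AC (x y : ℕ) (t : BMonoid) :
    bB * (bA^x * (bC^y * t)) = bA^y * (bB * (bA^x * t)) := by
  rw [wApow_Cpow x y t, ← wApow_B y (bA^x * t)]

lemma wK1 (x : ℕ) (t : BMonoid) :
    bB * (bA^x * (bB * (bA * t))) = bC * (bB * (bA^x * (bB * t))) := by
  induction x generalizing t with
  | zero => simpa using (wCBB t).symm
  | succ k ih =>
      rw [powA_succ k (bB * (bA * t)), wAB (bA * t), ← wAC t, ih (bC * t),
        ← wAB t, ← powA_succ k (bB * t)]

lemma wK0 (z x y : ℕ) (t : BMonoid) :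
    bB * (bA^x * (bC^y * (bB * (bA^z * t)))) =
      bA^y * (bC^z * (bB * (bA^x * (bB * t)))) := by
  induction z generalizing t with
  | zero => simpa using wB_AC x y (bB * t)
  | succ k ih =>
      rw [powA_succ k t, ih (bA * t), wK1 x t, pow_succ bC k, mul_assoc]

/-! ### Canonical forms -/

def can0 (x y : ℕ) : BMonoid := bA^x * bC^y
def can2 (x y z n : ℕ) : BMonoid := bA^x * (bC^y * (bB * (bA^z * bB^n)))

lemma stepA0 (x y : ℕ) : bA * can0 x y = can0 (x+1) y := by
  rw [can0, can0, ← mul_assoc, ← pow_succ']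
lemma stepC0 (x y : ℕ) : bC * can0 x y = can0 x (y+1) := by
  rw [can0, can0, wC_Apow, ← pow_succ']
lemma stepB0 (x y : ℕ) : bB * can0 x y = can2 y 0 x 0 := by
  rw [can0, can2]
  have := wB_AC x y 1
  simp only [mul_one] at this
  simp [this]
lemma stepA2 (x y z n : ℕ) : bA * can2 x y z n = can2 (x+1) y z n := by
  rw [can2, can2, ← mul_assoc, ← pow_succ']
lemma stepC2 (x y z n : ℕ) : bC * can2 x y z n = can2 x (y+1) z n := by
  rw [can2, can2, wC_Apow x (bC^y * (bB * (bA^z * bB^n))), ← powC_succ']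
lemma stepB2 (x y z n : ℕ) : bB * can2 x y z n = can2 y z x (n+1) := by
  rw [can2, can2, wK0 z x y (bB^n), ← pow_succ']


lemma ApowCan2 (k x y z n : ℕ) : bA^k * can2 x y z n = can2 (x+k) y z n := by
  induction k with
  | zero => simp
  | succ m ih => rw [powA_succ' m (can2 x y z n), ih, stepA2]; rfl
lemma CpowCan2 (k x y z n : ℕ) : bC^k * can2 x y z n = can2 x (y+k) z n := by
  induction k with
  | zero => simp
  | succ m ih => rw [powC_succ' m (can2 x y z n), ih, stepC2]; rfl

/-! ### Surjectivity onto canonical forms -/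

def gg : BGen → BMonoid
  | .a => bA
  | .b => bB
  | .c => bC

lemma coe_of (g : BGen) : ((FreeMonoid.of g : FreeMonoid BGen) : BMonoid) = gg g := by
  cases g <;> rfl

lemma surj (u : BMonoid) :
    (∃ x y, u = can0 x y) ∨ (∃ x y z n, u = can2 x y z n) := by
  induction u using Con.induction_on with
  | _ w =>
    induction w using FreeMonoid.inductionOn' with
    | one => exact Or.inl ⟨0, 0, by simp [can0]⟩
    | of_mul g w ih =>
      rw [Con.coe_mul, coe_of]
      rcases ih with ⟨x, y, h⟩ | ⟨x, y, z, n, h⟩ <;> rw [h] <;> cases g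
      · exact Or.inl ⟨x+1, y, stepA0 x y⟩
      · exact Or.inr ⟨y, 0, x, 0, stepB0 x y⟩
      · exact Or.inl ⟨x, y+1, stepC0 x y⟩
      · exact Or.inr ⟨x+1, y, z, n, stepA2 x y z n⟩
      · exact Or.inr ⟨y, z, x, n+1, stepB2 x y z n⟩
      · exact Or.inr ⟨x, y+1, z, n, stepC2 x y z n⟩

/-! ### φ on canonical forms -/

lemma gmA_pow (x : ℕ) : (⟨(1,0,0), 0⟩ : Gm)^x = ⟨(x,0,0), 0⟩ := by
  induction x with
  | zero => rfl
  | succ k ih => rw [pow_succ, ih, gm_mul_def]; simp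
lemma gmC_pow (y : ℕ) : (⟨(0,1,0), 0⟩ : Gm)^y = ⟨(0,y,0), 0⟩ := by
  induction y with
  | zero => rfl
  | succ k ih => rw [pow_succ, ih, gm_mul_def]; simp
lemma gmB_pow (n : ℕ) : (⟨(0,0,0), 1⟩ : Gm)^n = ⟨(0,0,0), n⟩ := by
  induction n with
  | zero => rfl
  | succ k ih => rw [pow_succ, ih, gm_mul_def]; simp [rotIter_zero, show ((0,0,0):ℕ×ℕ×ℕ) = 0 from rfl]

lemma phi_can0 (x y : ℕ) : phi (can0 x y) = ⟨(x,y,0), 0⟩ := by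
  rw [can0, map_mul, map_pow, map_pow, phi_bA, phi_bC, gmA_pow, gmC_pow, gm_mul_def]
  simp
lemma phi_can2 (x y z n : ℕ) : phi (can2 x y z n) = ⟨(x,y,z), n+1⟩ := by
  rw [can2, map_mul, map_mul, map_mul, map_mul, map_pow, map_pow, map_pow, map_pow,
    phi_bA, phi_bB, phi_bC, gmA_pow, gmA_pow, gmC_pow, gmB_pow]
  simp [gm_mul_def, rotIter_zero, rot]
  omega


/-! ### Injectivity on canonical forms -/

lemma can0_inj {x y x' y' : ℕ} (h : can0 x y = can0 x' y') : x = x' ∧ y = y' := by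
  have h2 := congrArg phi h
  rw [phi_can0, phi_can0] at h2
  simp only [Gm.mk.injEq, Prod.mk.injEq] at h2
  exact ⟨h2.1.1, h2.1.2.1⟩

lemma can2_inj {x y z n x' y' z' n' : ℕ} (h : can2 x y z n = can2 x' y' z' n') :
    x = x' ∧ y = y' ∧ z = z' ∧ n = n' := by
  have h2 := congrArg phi h
  rw [phi_can2, phi_can2] at h2
  simp only [Gm.mk.injEq, Prod.mk.injEq] at h2
  exact ⟨h2.1.1, h2.1.2.1, h2.1.2.2, by omega⟩

lemma can0_ne_can2 {x y x' y' z' n' : ℕ} : can0 x y ≠ can2 x' y' z' n' := by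
  intro h
  have h2 := congrArg phi h
  rw [phi_can0, phi_can2] at h2
  simp only [Gm.mk.injEq, Prod.mk.injEq] at h2
  omega

/-! ### Left cancellativity -/

lemma lcancel (x y z : BMonoid) (h : x * y = x * z) : y = z := by
  have hp : phi y = phi z := gm_cancel (by rw [← map_mul, ← map_mul, h])
  rcases surj y with ⟨a1, b1, hy⟩ | ⟨a1, b1, c1, d1, hy⟩ <;>
    rcases surj z with ⟨a2, b2, hz⟩ | ⟨a2, b2, c2, d2, hz⟩ <;> subst hy <;> subst hz
  · rw [phi_can0, phi_can0] at hp
    simp only [Gm.mk.injEq, Prod.mk.injEq] at hp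
    rw [hp.1.1, hp.1.2.1]
  · rw [phi_can0, phi_can2] at hp
    simp only [Gm.mk.injEq, Prod.mk.injEq] at hp
    omega
  · rw [phi_can2, phi_can0] at hp
    simp only [Gm.mk.injEq, Prod.mk.injEq] at hp
    omega
  · rw [phi_can2, phi_can2] at hp
    simp only [Gm.mk.injEq, Prod.mk.injEq] at hp
    obtain ⟨⟨e1, e2, e3⟩, e4⟩ := hp
    rw [e1, e2, e3, Nat.succ_injective e4]

end BHelper

open BHelper

/-- Left cancellativity and the reduction lemma for G⁺_{B_ii}:
(i) aX = bY implies X = bZ, Y = cZ; (ii) aX = cY implies X = cZ, Y = aZ;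
(iii) bX = cY implies X = c^k·b·a·Z, Y = a^k·b·b·Z for some k and Z. -/
theorem stmt_15 :
    (∀ x y z : BMonoid, x * y = x * z → y = z) ∧
    (∀ X Y : BMonoid, bA * X = bB * Y → ∃ Z : BMonoid, X = bB * Z ∧ Y = bC * Z) ∧
    (∀ X Y : BMonoid, bA * X = bC * Y → ∃ Z : BMonoid, X = bC * Z ∧ Y = bA * Z) ∧
    (∀ X Y : BMonoid, bB * X = bC * Y → ∃ (k : ℕ) (Z : BMonoid),
      X = bC ^ k * bB * bA * Z ∧ Y = bA ^ k * bB * bB * Z) := by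
  refine ⟨lcancel, ?_, ?_, ?_⟩
  · -- (i) aX = bY
    intro X Y h
    rcases surj X with ⟨x, y, hX⟩ | ⟨x, y, z, n, hX⟩ <;>
      rcases surj Y with ⟨x', y', hY⟩ | ⟨x', y', z', n', hY⟩ <;> subst hX <;> subst hY
    · rw [stepA0, stepB0] at h; exact absurd h can0_ne_can2
    · rw [stepA0, stepB2] at h; exact absurd h can0_ne_can2
    · rw [stepA2, stepB0] at h
      obtain ⟨e1, e2, e3, e4⟩ := can2_inj h
      subst e2; subst e4
      refine ⟨can0 z x, ?_, ?_⟩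
      · rw [stepB0]
      · rw [stepC0, ← e1, ← e3]
    · rw [stepA2, stepB2] at h
      obtain ⟨e1, e2, e3, e4⟩ := can2_inj h
      refine ⟨can2 z x y n', ?_, ?_⟩
      · rw [stepB2, ← e4]
      · rw [stepC2, ← e1, ← e2, ← e3]
  · -- (ii) aX = cY
    intro X Y h
    rcases surj X with ⟨x, y, hX⟩ | ⟨x, y, z, n, hX⟩ <;>
      rcases surj Y with ⟨x', y', hY⟩ | ⟨x', y', z', n', hY⟩ <;> subst hX <;> subst hY
    · rw [stepA0, stepC0] at h
      obtain ⟨e1, e2⟩ := can0_inj h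
      refine ⟨can0 x y', ?_, ?_⟩
      · rw [stepC0, ← e2]
      · rw [stepA0, ← e1]
    · rw [stepA0, stepC2] at h; exact absurd h can0_ne_can2
    · rw [stepA2, stepC0] at h; exact absurd h.symm can0_ne_can2
    · rw [stepA2, stepC2] at h
      obtain ⟨e1, e2, e3, e4⟩ := can2_inj h
      refine ⟨can2 x y' z n, ?_, ?_⟩
      · rw [stepC2, ← e2]
      · rw [stepA2, ← e1, ← e3, ← e4]
  · -- (iii) bX = cY
    intro X Y h
    rcases surj X with ⟨x, y, hX⟩ | ⟨x, y, z, n, hX⟩ <;>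
      rcases surj Y with ⟨x', y', hY⟩ | ⟨x', y', z', n', hY⟩ <;> subst hX <;> subst hY
    · rw [stepB0, stepC0] at h; exact absurd h.symm can0_ne_can2
    · rw [stepB0, stepC2] at h
      obtain ⟨e1, e2, e3, e4⟩ := can2_inj h
      omega
    · rw [stepB2, stepC0] at h; exact absurd h.symm can0_ne_can2
    · rw [stepB2, stepC2] at h
      obtain ⟨e1, e2, e3, e4⟩ := can2_inj h
      -- e1 : y = x', e2 : z = y' + 1, e3 : x = z', e4 : n + 1 = n'
      subst e2; subst e4; subst e1; subst e3
      refine ⟨y, ?_⟩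
      cases n with
      | zero =>
          refine ⟨can0 y' x, ?_, ?_⟩
          · rw [mul_assoc, mul_assoc, stepA0, stepB0, CpowCan2, Nat.zero_add y]
          · rw [mul_assoc, mul_assoc, stepB0, stepB2, ApowCan2, Nat.zero_add y]
      | succ m =>
          refine ⟨can2 y' x 0 m, ?_, ?_⟩
          · rw [mul_assoc, mul_assoc, stepA2, stepB2, CpowCan2, Nat.zero_add y]
          · rw [mul_assoc, mul_assoc, stepB2, stepB2, ApowCan2, Nat.zero_add y]
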